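/- Let 0 < β < 1, K > 0, A = (1+β)/(Kβ), and for s ∈ [0,1) set F(u,s) = 1 - (1-s)(1 + u(1-s)^β/A)^{-1/β}. If γ = β, then for all t ≥ 0, exp(-θ ∫_0^t (1 - F(u,s))^γ du) = (1 + t(1-s)^β/A)^{-θA}. -/

import Mathlib

open Real intervalIntegral

theorem pgf_immigration_gamma_eq_beta
    (β γ K θ A : ℝ) (hβ : 0 < β) (hβ1 : β < 1) (hK : 0 < K) (hθ : 0 < θ)
    (hA : A = (1 + β) / (K * β)) (hγβ : γ = β)
    (F : ℝ → ℝ → ℝ)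
    (hF : ∀ u s, F u s = 1 - (1 - s) * (1 + u * (1 - s) ^ β / A) ^ (-1 / β)) :
    ∀ s ∈ Set.Ico (0:ℝ) 1, ∀ t : ℝ, 0 ≤ t →
      Real.exp (-θ * ∫ u in (0:ℝ)..t, (1 - F u s) ^ γ)
        = (1 + t * (1 - s) ^ β / A) ^ (-(θ * A)) := by
  intro s hs t ht
  have hA0 : 0 < A := by
    rw [hA]; positivity
  have hs1 : 0 < 1 - s := by linarith [hs.2]
  set c : ℝ := (1 - s) ^ β with hc
  have hc0 : 0 < c := Real.rpow_pos_of_pos hs1 β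
  have hβne : β ≠ 0 := hβ.ne'
  have hX : ∀ u : ℝ, 0 ≤ u → 0 < 1 + u * c / A := by
    intro u hu
    have : 0 ≤ u * c / A := by positivity
    linarith
  have huIcc : Set.uIcc (0:ℝ) t = Set.Icc 0 t := Set.uIcc_of_le ht
  -- rewrite the integrand
  have hcong : ∀ u ∈ Set.uIcc (0:ℝ) t,
      (1 - F u s) ^ γ = c * (1 + u * c / A)⁻¹ := by
    intro u hu
    rw [huIcc] at hu
    have hXu := hX u hu.1
    have h1 : 1 - F u s = (1 - s) * (1 + u * c / A) ^ (-1 / β) := by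
      rw [hF]; ring
    rw [h1, hγβ, Real.mul_rpow hs1.le (Real.rpow_nonneg hXu.le _),
      ← Real.rpow_mul hXu.le]
    have h2 : -1 / β * β = -1 := by field_simp
    rw [h2, Real.rpow_neg_one]
  rw [intervalIntegral.integral_congr hcong]
  -- compute the integral via an antiderivative
  have hderiv : ∀ u ∈ Set.uIcc (0:ℝ) t,
      HasDerivAt (fun u => A * Real.log (1 + u * c / A))
        (c * (1 + u * c / A)⁻¹) u := by
    intro u hu
    rw [huIcc] at hu
    have hXu := hX u hu.1
    have hinner : HasDerivAt (fun u : ℝ => 1 + u * c / A) (c / A) u := by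
      simpa using (((hasDerivAt_id u).mul_const c).div_const A).const_add 1
    have hlog := (hinner.log hXu.ne').const_mul A
    refine hlog.congr_deriv ?_
    field_simp
  have hcontOn : ContinuousOn (fun u => c * (1 + u * c / A)⁻¹) (Set.uIcc 0 t) := by
    apply ContinuousOn.mul continuousOn_const
    apply ContinuousOn.inv₀
    · fun_prop
    · intro u hu
      rw [huIcc] at hu
      exact (hX u hu.1).ne'
  have hint : IntervalIntegrable (fun u => c * (1 + u * c / A)⁻¹)
      MeasureTheory.volume 0 t := hcontOn.intervalIntegrable
  rw [intervalIntegral.integral_eq_sub_of_hasDerivAt hderiv hint]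
  have hXt := hX t ht
  have : (1 + (0:ℝ) * c / A) = 1 := by ring
  rw [this, Real.log_one, mul_zero, sub_zero,
    Real.rpow_def_of_pos hXt]
  ring_nf
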